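/- Let n ≥ 3 be an integer and M a finite group of order 3·2^n such that every normal subgroup of M of odd order is trivial and a Sylow 2-subgroup P of M is not normal in M. Let G = Park(M,P) be Park's group and ι : M → G Park's embedding. Then for every subgroup Q of P that is not contained in the normal core of P in M (equivalently, Q ≰ O_2(M)), the centralizer C_G(ι(Q)) is a 2-group. -/

import Mathlib

/-- Park's group `Park(M, P)`: the group of bijections of `M` commuting with the
right multiplication action of `P`. -/
def parkGroup (M : Type*) [Group M] (P : Subgroup M) : Subgroup (Equiv.Perm M) where
  carrier := {f : Equiv.Perm M | ∀ (m u : M), u ∈ P → f (m * u) = f m * u}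
  one_mem' := by intro m u _; rfl
  mul_mem' := by
    intro f g hf hg m u hu
    simp only [Equiv.Perm.mul_apply]
    rw [hg m u hu, hf _ u hu]
  inv_mem' := by
    intro f hf m u hu
    apply f.injective
    rw [Equiv.Perm.coe_inv, Equiv.apply_symm_apply, hf _ u hu, Equiv.apply_symm_apply]

/-- Park's embedding of `M` into `Park(M, P)`, sending `m` to left translation by `m`. -/
def parkEmbed (M : Type*) [Group M] (P : Subgroup M) : M →* ↥(parkGroup M P) where
  toFun m := ⟨Equiv.mulLeft m, fun x u _ => by simp [mul_assoc]⟩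
  map_one' := by
    apply Subtype.ext
    ext x
    simp
  map_mul' m n := by
    apply Subtype.ext
    ext x
    simp [mul_assoc]

/-- `P` is a Sylow `p`-subgroup of a subgroup `H` of `G`. -/
def IsSylowIn (p : ℕ) {G : Type*} [Group G] (H P : Subgroup G) : Prop :=
  P ≤ H ∧ IsPGroup p P ∧ ∀ Q : Subgroup G, Q ≤ H → IsPGroup p Q → P ≤ Q → Q = P

namespace ParkAux

theorem perm3_aux : ∀ (ρ τ : Equiv.Perm (Fin 3)) (x : Fin 3),
    ρ * τ = τ * ρ → τ x = x → ρ ^ 2 ≠ 1 → τ = 1 := by decide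

variable {M : Type*} [Group M] {P : Subgroup M}

theorem park_apply (g : ↥(parkGroup M P)) (m u : M) (hu : u ∈ P) :
    (g : Equiv.Perm M) (m * u) = (g : Equiv.Perm M) m * u := g.2 m u hu

/-- The permutation of left cosets induced by an element of Park's group. -/
def quotPerm (g : ↥(parkGroup M P)) : Equiv.Perm (M ⧸ P) where
  toFun := Quotient.map' (g : Equiv.Perm M) (by
    intro a b hab
    rw [QuotientGroup.leftRel_apply] at *
    have h1 : (g : Equiv.Perm M) (a * (a⁻¹ * b)) = (g : Equiv.Perm M) a * (a⁻¹ * b) :=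
      park_apply g a _ hab
    rw [mul_inv_cancel_left] at h1
    rw [h1, ← mul_assoc, inv_mul_cancel, one_mul]
    exact hab)
  invFun := Quotient.map' ⇑((g : Equiv.Perm M).symm) (by
    intro a b hab
    rw [QuotientGroup.leftRel_apply] at *
    have h1 : ((g⁻¹ : ↥(parkGroup M P)) : Equiv.Perm M) (a * (a⁻¹ * b))
        = ((g⁻¹ : ↥(parkGroup M P)) : Equiv.Perm M) a * (a⁻¹ * b) :=
      park_apply g⁻¹ a _ hab
    rw [mul_inv_cancel_left] at h1
    have h2 : ((g⁻¹ : ↥(parkGroup M P)) : Equiv.Perm M) = (g : Equiv.Perm M).symm := rfl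
    rw [h2] at h1
    rw [h1, ← mul_assoc, inv_mul_cancel, one_mul]
    exact hab)
  left_inv := by
    intro x
    induction x using Quotient.inductionOn' with
    | h m => simp only [Quotient.map'_mk'', Equiv.symm_apply_apply]
  right_inv := by
    intro x
    induction x using Quotient.inductionOn' with
    | h m => simp only [Quotient.map'_mk'', Equiv.apply_symm_apply]

@[simp] theorem quotPerm_mk (g : ↥(parkGroup M P)) (m : M) :
    quotPerm g (QuotientGroup.mk m) = QuotientGroup.mk ((g : Equiv.Perm M) m) := rfl

theorem parkEmbed_apply (q m : M) :
    ((parkEmbed M P q : ↥(parkGroup M P)) : Equiv.Perm M) m = q * m := rfl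

end ParkAux

open ParkAux

/-- let `M` be a finite group of order `3·2^n` (`n ≥ 3`) with no
non-trivial normal subgroup of odd order and with a non-normal Sylow `2`-subgroup
`P`, and let `G = Park(M, P)` with Park's embedding `ι`.  For every subgroup
`Q ≤ P` not contained in the normal core of `P` in `M` (i.e. `Q ≰ O_2(M)`), the
centralizer `C_G(ι(Q))` is a `2`-group. -/
theorem statement15 (n : ℕ) (hn : 3 ≤ n)
    (M : Type*) [Group M] [Finite M] (hM : Nat.card M = 3 * 2 ^ n)
    (hodd : ∀ K : Subgroup M, K.Normal → Odd (Nat.card K) → K = ⊥)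
    (P : Subgroup M) (hsyl : IsSylowIn 2 ⊤ P) (hPnn : ¬ P.Normal)
    (Q : Subgroup M) (hQP : Q ≤ P) (hQ : ¬ Q ≤ P.normalCore) :
    IsPGroup 2 (Subgroup.centralizer
      ((Q.map (parkEmbed M P) : Subgroup ↥(parkGroup M P)) : Set ↥(parkGroup M P))) := by
  classical
  -- `P` is a genuine Sylow subgroup, so its cardinality is `2 ^ n`
  obtain ⟨S, hPS⟩ := hsyl.2.1.exists_le_sylow
  have hSP : (S : Subgroup M) = P := hsyl.2.2 S le_top S.isPGroup' hPS
  have hfact : (Nat.card M).factorization 2 = n := by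
    rw [hM]
    rw [Nat.factorization_mul (by norm_num) (by positivity)]
    rw [Nat.Prime.factorization_pow Nat.prime_two]
    simp [Nat.factorization_eq_zero_of_not_dvd (by norm_num : ¬ (2:ℕ) ∣ 3)]
  have hcardP : Nat.card P = 2 ^ n := by
    have h := Sylow.card_eq_multiplicity S
    rw [hfact] at h
    rw [← hSP]
    exact h
  have hidx : Nat.card (M ⧸ P) = 3 := by
    have h1 : Nat.card P * P.index = Nat.card M := Subgroup.card_mul_index P
    rw [hcardP, hM, Subgroup.index_eq_card] at h1
    have h2 : (2:ℕ) ^ n * Nat.card (M ⧸ P) = 2 ^ n * 3 := by rw [h1]; ring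
    exact Nat.eq_of_mul_eq_mul_left (by positivity) h2
  let e : (M ⧸ P) ≃ Fin 3 := Finite.equivFinOfCardEq hidx
  intro g
  -- centralizer property, pointwise
  have hcent := g.2
  rw [Subgroup.mem_centralizer_iff] at hcent
  have hcomm : ∀ q ∈ Q, ∀ m : M,
      ((g.1 : Equiv.Perm M)) (q * m) = q * (g.1 : Equiv.Perm M) m := by
    intro q hq m
    have hx : (parkEmbed M P q) * g.1 = g.1 * parkEmbed M P q :=
      hcent _ ⟨q, hq, rfl⟩
    have h3 := congrArg (fun z : ↥(parkGroup M P) => (z : Equiv.Perm M) m) hx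
    simpa [Equiv.Perm.mul_apply, parkEmbed_apply] using h3.symm
  -- the induced permutation on `M ⧸ P`, transported to `Fin 3`
  set ρ : Equiv.Perm (Fin 3) := e.permCongr (quotPerm g.1) with hρdef
  by_cases hρ2 : ρ ^ 2 = 1
  · -- `g.1 ^ 2` fixes every coset, hence lies in a 2-group
    have hfix : ∀ m : M, m⁻¹ * (g.1 : Equiv.Perm M) ((g.1 : Equiv.Perm M) m) ∈ P := by
      intro m
      have h1 : ρ (ρ (e (QuotientGroup.mk m))) = e (QuotientGroup.mk m) := by
        have := congrArg (fun σ : Equiv.Perm (Fin 3) => σ (e (QuotientGroup.mk m))) hρ2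
        simpa [pow_two, Equiv.Perm.mul_apply] using this
      simp only [hρdef, Equiv.permCongr_apply, Equiv.symm_apply_apply, quotPerm_mk] at h1
      have h2 := e.injective h1
      rw [QuotientGroup.eq] at h2
      have h3 := P.inv_mem h2
      simpa [mul_inv_rev] using h3
    have hk : ∀ (j : ℕ) (m : M),
        (((g.1 ^ 2) ^ j : ↥(parkGroup M P)) : Equiv.Perm M) m
          = m * (m⁻¹ * (g.1 : Equiv.Perm M) ((g.1 : Equiv.Perm M) m)) ^ j := by
      intro j
      induction j with
      | zero => intro m; simp
      | succ j ih =>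
        intro m
        set p := m⁻¹ * (g.1 : Equiv.Perm M) ((g.1 : Equiv.Perm M) m) with hp
        have hpm : p ∈ P := hfix m
        have hsq : ((g.1 ^ 2 : ↥(parkGroup M P)) : Equiv.Perm M) m = m * p := by
          rw [hp, mul_inv_cancel_left]
          simp [pow_two]
        calc (((g.1 ^ 2) ^ (j+1) : ↥(parkGroup M P)) : Equiv.Perm M) m
            = ((g.1 ^ 2 : ↥(parkGroup M P)) : Equiv.Perm M)
                ((((g.1 ^ 2) ^ j : ↥(parkGroup M P)) : Equiv.Perm M) m) := by
              rw [pow_succ']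
              simp [Equiv.Perm.mul_apply]
          _ = ((g.1 ^ 2 : ↥(parkGroup M P)) : Equiv.Perm M) (m * p ^ j) := by rw [ih m]
          _ = ((g.1 ^ 2 : ↥(parkGroup M P)) : Equiv.Perm M) m * p ^ j :=
              park_apply _ m _ (pow_mem hpm j)
          _ = m * p ^ (j+1) := by rw [hsq, pow_succ', mul_assoc]
    refine ⟨n + 1, ?_⟩
    have hone : g.1 ^ 2 ^ (n+1) = 1 := by
      have h2n : (2:ℕ) ^ (n+1) = 2 * 2 ^ n := by ring
      rw [h2n, pow_mul]
      apply Subtype.ext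
      apply Equiv.ext
      intro m
      have hpm : m⁻¹ * (g.1 : Equiv.Perm M) ((g.1 : Equiv.Perm M) m) ∈ P := hfix m
      have hpc : (⟨_, hpm⟩ : P) ^ 2 ^ n = 1 := by
        rw [← hcardP]; exact pow_card_eq_one'
      have hpc' : (m⁻¹ * (g.1 : Equiv.Perm M) ((g.1 : Equiv.Perm M) m)) ^ 2 ^ n = 1 := by
        have h5 := congrArg (Subtype.val) hpc
        simpa using h5
      rw [hk (2 ^ n) m, hpc', mul_one]
      simp
    apply Subtype.ext
    simp only [SubmonoidClass.coe_pow, OneMemClass.coe_one]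
    exact hone
  · exfalso
    apply hQ
    intro q hq
    have hτ : e.permCongr (quotPerm (parkEmbed M P q)) = 1 := by
      apply perm3_aux ρ _ (e (QuotientGroup.mk (1:M))) _ _ hρ2
      · apply Equiv.ext
        intro x
        obtain ⟨m, hm⟩ := QuotientGroup.mk_surjective (e.symm x)
        have hx : x = e (QuotientGroup.mk m) := by rw [hm, Equiv.apply_symm_apply]
        rw [hx]
        simp only [Equiv.Perm.mul_apply, Equiv.permCongr_apply, Equiv.symm_apply_apply,
          quotPerm_mk, parkEmbed_apply, hρdef]
        rw [hcomm q hq m]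
      · simp only [Equiv.permCongr_apply, Equiv.symm_apply_apply, quotPerm_mk,
          parkEmbed_apply]
        congr 1
        rw [QuotientGroup.eq]
        simpa using P.inv_mem (hQP hq)
    show ∀ b : M, b * q * b⁻¹ ∈ P
    intro b
    have h1 := congrArg (fun σ : Equiv.Perm (Fin 3) => σ (e (QuotientGroup.mk b⁻¹))) hτ
    simp only [Equiv.permCongr_apply, Equiv.symm_apply_apply, quotPerm_mk,
      parkEmbed_apply, Equiv.Perm.one_apply] at h1
    have h2 := e.injective h1
    rw [QuotientGroup.eq] at h2
    have h3 := P.inv_mem h2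
    simpa [mul_inv_rev, mul_assoc] using h3
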